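/- (Two-sided lossless expander to lossless expander via the bipartite half) Let L and R be finite types, let E : L → R → Prop be a relation (the edge relation of a bipartite graph), let D_L, D_R, K_L, K_R be natural numbers and A_L, A_R be nonnegative real numbers. Assume: (a) every v ∈ L is related to exactly D_L elements of R; (b) every w ∈ R is related to exactly D_R elements of L; (c) for every finite set S ⊆ L with |S| ≤ K_L, the set Γ_L(S) := {w ∈ R : ∃ v ∈ S, E v w} satisfies |Γ_L(S)| ≥ A_L·|S|; (d) for every finite set T ⊆ R with |T| ≤ K_R, the set Γ_R(T) := {v ∈ L : ∃ w ∈ T, E v w} satisfies |Γ_R(T)| ≥ A_R·|T|; (e) D_L ≤ K_R. Then: (i) for every v ∈ L, the set Γ²(v) := {u ∈ L : ∃ w ∈ R, E v w and E u w} satisfies D_L·A_R ≤ |Γ²(v)| ≤ D_L·D_R; and (ii) for every finite set S ⊆ L with |S| ≤ K_L and D_L·|S| ≤ K_R, the set Γ²(S) := {u ∈ L : ∃ v ∈ S, ∃ w ∈ R, E v w and E u w} satisfies |Γ²(S)| ≥ A_L·A_R·|S|. -/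

import Mathlib

/-- Auxiliary: a finite union of sets of size ≤ d over an index set of size n
has size ≤ d * n. -/
lemma aux_biUnion_card {L R : Type*} [Fintype R] (s : Finset L) (f : L → Set R)
    (d : ℕ) (hf : ∀ v, (f v).ncard ≤ d) :
    (⋃ v ∈ (s : Set L), f v).ncard ≤ d * s.card := by
  classical
  induction s using Finset.induction with
  | empty => simp
  | insert a s hx ih =>
    rw [Finset.coe_insert, Set.biUnion_insert]
    calc (f a ∪ ⋃ v ∈ (s : Set L), f v).ncard
        ≤ (f a).ncard + (⋃ v ∈ (s : Set L), f v).ncard := Set.ncard_union_le _ _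
      _ ≤ d + d * s.card := Nat.add_le_add (hf a) ih
      _ = d * (insert a s).card := by rw [Finset.card_insert_of_notMem hx]; ring

/-- The bipartite half of a two-sided lossless expander is a max-degree lossless
expander. -/
theorem stmt_17 {L R : Type*} [Fintype L] [Fintype R]
    (E : L → R → Prop) (DL DR KL KR : ℕ) (AL AR : ℝ) (hAL : 0 ≤ AL) (hAR : 0 ≤ AR)
    (ha : ∀ v : L, Set.ncard {w : R | E v w} = DL)
    (hb : ∀ w : R, Set.ncard {v : L | E v w} = DR)
    (hc : ∀ S : Set L, S.ncard ≤ KL →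
      AL * (S.ncard : ℝ) ≤ (Set.ncard {w : R | ∃ v ∈ S, E v w} : ℝ))
    (hd : ∀ T : Set R, T.ncard ≤ KR →
      AR * (T.ncard : ℝ) ≤ (Set.ncard {v : L | ∃ w ∈ T, E v w} : ℝ))
    (he : DL ≤ KR) :
    (∀ v : L,
      (DL : ℝ) * AR ≤ (Set.ncard {u : L | ∃ w : R, E v w ∧ E u w} : ℝ) ∧
      Set.ncard {u : L | ∃ w : R, E v w ∧ E u w} ≤ DL * DR) ∧
    (∀ S : Set L, S.ncard ≤ KL → DL * S.ncard ≤ KR →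
      AL * AR * (S.ncard : ℝ) ≤
        (Set.ncard {u : L | ∃ v ∈ S, ∃ w : R, E v w ∧ E u w} : ℝ)) := by
  classical
  constructor
  · intro v
    constructor
    · have := hd {w : R | E v w} (by rw [ha v]; exact he)
      rw [ha v] at this
      have heq : {u : L | ∃ w ∈ {w : R | E v w}, E u w}
          = {u : L | ∃ w : R, E v w ∧ E u w} := by
        ext u; simp only [Set.mem_setOf_eq]
      rw [heq] at this
      linarith [this]
    · have hsub : {u : L | ∃ w : R, E v w ∧ E u w}
          ⊆ ⋃ w ∈ (({w : R | E v w}.toFinset : Finset R) : Set R), {u : L | E u w} := by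
        intro u hu
        obtain ⟨w, hvw, huw⟩ := hu
        simp only [Set.mem_iUnion]
        exact ⟨w, by simpa using hvw, huw⟩
      calc {u : L | ∃ w : R, E v w ∧ E u w}.ncard
          ≤ (⋃ w ∈ (({w : R | E v w}.toFinset : Finset R) : Set R), {u : L | E u w}).ncard :=
            Set.ncard_le_ncard hsub (Set.toFinite _)
        _ ≤ DR * {w : R | E v w}.toFinset.card :=
            aux_biUnion_card _ _ DR (fun w => le_of_eq (hb w))
        _ = DR * DL := by rw [← Set.ncard_eq_toFinset_card', ha v]
        _ = DL * DR := Nat.mul_comm _ _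
  · intro S hS1 hS2
    set T : Set R := {w : R | ∃ v ∈ S, E v w} with hT
    have hTcard : T.ncard ≤ KR := by
      have hsub : T ⊆ ⋃ v ∈ ((S.toFinset : Finset L) : Set L), {w : R | E v w} := by
        intro w hw
        obtain ⟨v, hv, hvw⟩ := hw
        simp only [Set.mem_iUnion]
        exact ⟨v, by simpa using hv, hvw⟩
      calc T.ncard ≤ (⋃ v ∈ ((S.toFinset : Finset L) : Set L), {w : R | E v w}).ncard :=
            Set.ncard_le_ncard hsub (Set.toFinite _)
        _ ≤ DL * S.toFinset.card := aux_biUnion_card _ _ DL (fun v => le_of_eq (ha v))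
        _ = DL * S.ncard := by rw [← Set.ncard_eq_toFinset_card']
        _ ≤ KR := hS2
    have h1 := hc S hS1
    have h2 := hd T hTcard
    have heq : {v : L | ∃ w ∈ T, E v w} = {u : L | ∃ v ∈ S, ∃ w : R, E v w ∧ E u w} := by
      ext u; simp only [Set.mem_setOf_eq, hT]; tauto
    rw [heq] at h2
    calc AL * AR * (S.ncard : ℝ) = AR * (AL * S.ncard) := by ring
      _ ≤ AR * T.ncard := by apply mul_le_mul_of_nonneg_left h1 hAR
      _ ≤ _ := h2
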